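/- Existence of the extremal solution: Under the standing assumptions, let f ∈ C¹([0,∞)) be strictly convex, increasing, with f(0) > 0 and lim_{s→∞} f(s)/s = +∞, and let λ* be the extremal parameter of (P(λf)). Then the problem (P(λ* f)) admits a bounded minimal solution u* (the extremal solution). -/

import Mathlib

open MeasureTheory Set

/-- The `m`-boundary of a set `Ω`. -/
def mBoundary {X : Type*} [MeasurableSpace X] (m : X → MeasureTheory.Measure X)
    (Ω : Set X) : Set X :=
  {x | x ∉ Ω ∧ 0 < m x Ω}

/-- The `m`-closure of a set `Ω`. -/
def mClosure {X : Type*} [MeasurableSpace X] (m : X → MeasureTheory.Measure X)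
    (Ω : Set X) : Set X :=
  Ω ∪ mBoundary m Ω

/-- The nonlocal `m`-Laplacian. -/
noncomputable def deltaM {X : Type*} [MeasurableSpace X] (m : X → MeasureTheory.Measure X)
    (u : X → ℝ) (x : X) : ℝ :=
  ∫ y, (u y - u x) ∂(m x)

/-- `m` is a random walk: each `m x` is a probability measure and `x ↦ m x A` is measurable. -/
def IsRandomWalk {X : Type*} [MeasurableSpace X] (m : X → MeasureTheory.Measure X) : Prop :=
  (∀ x, IsProbabilityMeasure (m x)) ∧
    ∀ A : Set X, MeasurableSet A → Measurable fun x => m x A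

/-- `ν` is reversible with respect to the random walk `m`. -/
def Reversible {X : Type*} [MeasurableSpace X] (m : X → MeasureTheory.Measure X)
    (ν : MeasureTheory.Measure X) : Prop :=
  ∀ F : X → X → ℝ, Measurable (Function.uncurry F) → (∃ C, ∀ x y, |F x y| ≤ C) →
    ∫ x, (∫ y, F x y ∂(m x)) ∂ν = ∫ x, (∫ y, F y x ∂(m x)) ∂ν

/-- `Ω` is `m`-connected with respect to `ν`. -/
def mConnected {X : Type*} [MeasurableSpace X] (m : X → MeasureTheory.Measure X)
    (ν : MeasureTheory.Measure X) (Ω : Set X) : Prop :=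
  ∀ A B : Set X, MeasurableSet A → MeasurableSet B → A ⊆ Ω → B ⊆ Ω → A ∪ B = Ω →
    ν A ≠ 0 → ν B ≠ 0 → 0 < ∫ x in A, (m x B).toReal ∂ν

/-- Membership in `L²₀(Ω_m, ν)`: square integrable on `Ω_m`, vanishing `ν`-a.e. on the
`m`-boundary, extended by `0` outside `Ω_m`. -/
def MemL20 {X : Type*} [MeasurableSpace X] (m : X → MeasureTheory.Measure X)
    (ν : MeasureTheory.Measure X) (Ω : Set X) (u : X → ℝ) : Prop :=
  Measurable u ∧ MeasureTheory.MemLp u 2 (ν.restrict (mClosure m Ω)) ∧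
    (∀ᵐ x ∂(ν.restrict (mBoundary m Ω)), u x = 0) ∧ ∀ x ∉ mClosure m Ω, u x = 0

/-- The nonlocal Dirichlet energy `(1/2)∬_{Ω_m×Ω_m} |u(y)-u(x)|² dm_x(y) dν(x)`. -/
noncomputable def gradEnergy {X : Type*} [MeasurableSpace X] (m : X → MeasureTheory.Measure X)
    (ν : MeasureTheory.Measure X) (Ω : Set X) (u : X → ℝ) : ℝ :=
  (1 / 2) * ∫ x in mClosure m Ω, (∫ y in mClosure m Ω, (u y - u x) ^ 2 ∂(m x)) ∂ν

/-- The standing assumptions of the paper: reversible random walk space, `Ω` `m`-connected with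
`0 < ν(Ω) < ν(Ω_m) < ∞`, a 2-Poincaré inequality with first eigenvalue `lam = λ_m(Ω)` attained
by an eigenfunction `φ` with `0 < α ≤ φ ≤ M` a.e. on `Ω` and `φ = 0` on `∂_mΩ`. -/
structure Standing {X : Type*} [MeasurableSpace X] (m : X → MeasureTheory.Measure X)
    (ν : MeasureTheory.Measure X) (Ω : Set X) (lam : ℝ) (φ : X → ℝ) (α M : ℝ) : Prop where
  hrw : IsRandomWalk m
  hrev : Reversible m ν
  hsigma : MeasureTheory.SigmaFinite ν
  hmeasΩ : MeasurableSet Ω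
  hconn : mConnected m ν Ω
  hpos : 0 < ν Ω
  hlt : ν Ω < ν (mClosure m Ω)
  hfin : ν (mClosure m Ω) < ⊤
  hlamPos : 0 < lam
  hpoincare : ∀ u : X → ℝ, MemL20 m ν Ω u →
    lam * ∫ x in Ω, u x ^ 2 ∂ν ≤ gradEnergy m ν Ω u
  hphiMem : MemL20 m ν Ω φ
  heig : ∀ᵐ x ∂(ν.restrict Ω), -(deltaM m φ x) = lam * φ x
  halphaPos : 0 < α
  halphaM : α ≤ M
  hphiLB : ∀ᵐ x ∂(ν.restrict Ω), α ≤ φ x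
  hphiUB : ∀ᵐ x ∂(ν.restrict Ω), φ x ≤ M

/-- Essential boundedness on a set `S` with respect to `ν`. -/
def IsBdd {X : Type*} [MeasurableSpace X] (ν : MeasureTheory.Measure X) (S : Set X)
    (u : X → ℝ) : Prop :=
  ∃ C : ℝ, ∀ᵐ x ∂(ν.restrict S), |u x| ≤ C

/-- A (nonnegative) solution of the Gelfand-type problem `(P(λ f))`. -/
def IsSol {X : Type*} [MeasurableSpace X] (m : X → MeasureTheory.Measure X)
    (ν : MeasureTheory.Measure X) (Ω : Set X) (lam : ℝ) (f : ℝ → ℝ) (u : X → ℝ) : Prop :=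
  MemL20 m ν Ω u ∧ (∀ᵐ x ∂(ν.restrict (mClosure m Ω)), 0 ≤ u x) ∧
    ∀ᵐ x ∂(ν.restrict Ω), -(deltaM m u x) = lam * f (u x)

/-- A solution of `(P(λ f))` without a sign constraint. -/
def IsSolNS {X : Type*} [MeasurableSpace X] (m : X → MeasureTheory.Measure X)
    (ν : MeasureTheory.Measure X) (Ω : Set X) (lam : ℝ) (f : ℝ → ℝ) (u : X → ℝ) : Prop :=
  MemL20 m ν Ω u ∧ ∀ᵐ x ∂(ν.restrict Ω), -(deltaM m u x) = lam * f (u x)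

/-- A minimal solution of `(P(λ f))`. -/
def IsMinimalSol {X : Type*} [MeasurableSpace X] (m : X → MeasureTheory.Measure X)
    (ν : MeasureTheory.Measure X) (Ω : Set X) (lam : ℝ) (f : ℝ → ℝ) (u : X → ℝ) : Prop :=
  IsSol m ν Ω lam f u ∧
    ∀ v : X → ℝ, IsSol m ν Ω lam f v → ∀ᵐ x ∂(ν.restrict (mClosure m Ω)), u x ≤ v x

/-- The extremal parameter `λ*`. -/
noncomputable def lamStar {X : Type*} [MeasurableSpace X] (m : X → MeasureTheory.Measure X)
    (ν : MeasureTheory.Measure X) (Ω : Set X) (f : ℝ → ℝ) : ℝ :=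
  sSup {lam : ℝ | 0 ≤ lam ∧ ∃ u : X → ℝ, IsSol m ν Ω lam f u ∧ IsBdd ν (mClosure m Ω) u}

/-- Hypotheses (H) on the nonlinearity `f` with constant `c₁`. -/
def HypH (f : ℝ → ℝ) (c₁ : ℝ) : Prop :=
  ContinuousOn f (Set.Ici 0) ∧ MonotoneOn f (Set.Ici 0) ∧ 0 < f 0 ∧ 0 < c₁ ∧
    ∀ s : ℝ, 0 ≤ s → c₁ * s ≤ f s

/-- The stability quadratic form `Q_u(v)` with linearized potential `fp ∘ u` (where `fp = f'`). -/
noncomputable def Qform {X : Type*} [MeasurableSpace X] (m : X → MeasureTheory.Measure X)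
    (ν : MeasureTheory.Measure X) (Ω : Set X) (lam : ℝ) (fp : ℝ → ℝ) (u v : X → ℝ) : ℝ :=
  gradEnergy m ν Ω v - lam * ∫ x in Ω, fp (u x) * v x ^ 2 ∂ν

/-- Stability of a solution: `Q_u(v) ≥ 0` for all test functions `v ∈ L^∞ ∩ L²₀`. -/
def IsStable {X : Type*} [MeasurableSpace X] (m : X → MeasureTheory.Measure X)
    (ν : MeasureTheory.Measure X) (Ω : Set X) (lam : ℝ) (fp : ℝ → ℝ) (u : X → ℝ) : Prop :=
  ∀ v : X → ℝ, MemL20 m ν Ω v → IsBdd ν (mClosure m Ω) v → 0 ≤ Qform m ν Ω lam fp u v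

/-- The first eigenvalue `μ₁(u)` of the linearized operator, as an infimum of `Q_u` over
normalized test functions. -/
noncomputable def mu1 {X : Type*} [MeasurableSpace X] (m : X → MeasureTheory.Measure X)
    (ν : MeasureTheory.Measure X) (Ω : Set X) (lam : ℝ) (fp : ℝ → ℝ) (u : X → ℝ) : ℝ :=
  sInf {r : ℝ | ∃ v : X → ℝ, MemL20 m ν Ω v ∧ (∫ x in Ω, v x ^ 2 ∂ν) = 1 ∧
    r = Qform m ν Ω lam fp u v}


/-! ### Auxiliary machinery for the proof of `extremal_solution_existence` -/

section ExtremalAux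
open Filter Topology ProbabilityTheory
open scoped ENNReal

variable {X : Type*} [MeasurableSpace X] {m : X → Measure X} {ν : Measure X} {Ω : Set X}

private lemma bdd_integrable' (hprob : ∀ x, IsProbabilityMeasure (m x)) {u : X → ℝ}
    (hu : Measurable u) {a b : ℝ} (h1 : ∀ y, a ≤ u y) (h2 : ∀ y, u y ≤ b) (x : X) :
    Integrable u (m x) := by
  haveI := hprob x
  refine Integrable.mono' (integrable_const (|a| + |b|)) hu.aestronglyMeasurable ?_
  filter_upwards with y
  rw [Real.norm_eq_abs, abs_le]
  constructor
  · have := neg_abs_le a; have := abs_nonneg b; have := h1 y; linarith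
  · have := le_abs_self b; have := abs_nonneg a; have := h2 y; linarith

private lemma measurable_kint' (hprob : ∀ x, IsProbabilityMeasure (m x))
    (hmeas : ∀ A : Set X, MeasurableSet A → Measurable fun x => m x A)
    {u : X → ℝ} (hu : Measurable u) :
    Measurable fun x => ∫ y, u y ∂ m x := by
  have hm : Measurable m := Measure.measurable_of_measurable_coe _ fun A hA => hmeas A hA
  let κ : ProbabilityTheory.Kernel X X := ⟨m, hm⟩
  haveI : IsMarkovKernel κ := ⟨hprob⟩
  have h : StronglyMeasurable fun x => ∫ y, (fun _ y => u y) x y ∂ κ x :=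
    MeasureTheory.StronglyMeasurable.integral_kernel_prod_right
      (f := fun _ y => u y) (hu.comp measurable_snd).stronglyMeasurable
  exact h.measurable

private lemma null_transfer (hrev : Reversible m ν)
    (hprob : ∀ x, IsProbabilityMeasure (m x))
    (hmeas : ∀ A : Set X, MeasurableSet A → Measurable fun x => m x A)
    (hΩ : MeasurableSet Ω) (hfin : ν Ω ≠ ⊤)
    {N : Set X} (hN : MeasurableSet N) (hNnull : ν N = 0) :
    ∀ᵐ x ∂ν.restrict Ω, m x N = 0 := by
  set F : X → X → ℝ := fun a b => Ω.indicator (fun _ => (1:ℝ)) a * N.indicator (fun _ => (1:ℝ)) b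
    with hF
  have hFmeas : Measurable (Function.uncurry F) := by
    apply Measurable.mul
    · exact (measurable_const.indicator hΩ).comp measurable_fst
    · exact (measurable_const.indicator hN).comp measurable_snd
  have hFbdd : ∃ C, ∀ x y, |F x y| ≤ C := by
    refine ⟨1, fun x y => ?_⟩
    simp only [hF]
    rw [abs_mul]
    have h1 : |Ω.indicator (fun _ => (1:ℝ)) x| ≤ 1 := by
      by_cases h : x ∈ Ω <;> simp [Set.indicator_apply, h]
    have h2 : |N.indicator (fun _ => (1:ℝ)) y| ≤ 1 := by
      by_cases h : y ∈ N <;> simp [Set.indicator_apply, h]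
    calc |Ω.indicator (fun _ => (1:ℝ)) x| * |N.indicator (fun _ => (1:ℝ)) y| ≤ 1 * 1 := by
          apply mul_le_mul h1 h2 (abs_nonneg _) zero_le_one
      _ = 1 := by ring
  have key := hrev F hFmeas hFbdd
  have hL : ∀ x, (∫ y, F x y ∂(m x)) = Ω.indicator (fun _ => (1:ℝ)) x * (m x N).toReal := by
    intro x
    rw [integral_const_mul]
    congr 1
    exact integral_indicator_one (μ := m x) hN
  have hR : ∀ x, (∫ y, F y x ∂(m x)) = N.indicator (fun _ => (1:ℝ)) x * (m x Ω).toReal := by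
    intro x
    simp only [hF]
    rw [MeasureTheory.integral_mul_const]
    rw [mul_comm]
    congr 1
    exact integral_indicator_one (μ := m x) hΩ
  simp only [hL, hR] at key
  have hRzero : ∫ x, N.indicator (fun _ => (1:ℝ)) x * (m x Ω).toReal ∂ν = 0 := by
    apply integral_eq_zero_of_ae
    have : ∀ᵐ x ∂ν, x ∉ N := by
      rw [ae_iff]; simpa using hNnull
    filter_upwards [this] with x hx
    simp [Set.indicator_of_notMem hx]
  rw [hRzero] at key
  have hnn : ∀ x, 0 ≤ Ω.indicator (fun _ => (1:ℝ)) x * (m x N).toReal := by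
    intro x
    apply mul_nonneg _ ENNReal.toReal_nonneg
    by_cases h : x ∈ Ω <;> simp [Set.indicator_apply, h]
  have hintmeas : Measurable fun x => Ω.indicator (fun _ => (1:ℝ)) x * (m x N).toReal :=
    (measurable_const.indicator hΩ).mul ((hmeas N hN).ennreal_toReal)
  have hint : Integrable (fun x => Ω.indicator (fun _ => (1:ℝ)) x * (m x N).toReal) ν := by
    have hind : Integrable (Ω.indicator (fun _ => (1:ℝ))) ν :=
      (integrable_indicator_iff hΩ).mpr (integrableOn_const hfin)
    refine Integrable.mono' hind hintmeas.aestronglyMeasurable ?_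
    filter_upwards with x
    rw [Real.norm_eq_abs, abs_of_nonneg (hnn x)]
    by_cases h : x ∈ Ω
    · simp only [Set.indicator_of_mem h]
      haveI := hprob x
      have : (m x N).toReal ≤ 1 := by
        have := prob_le_one (μ := m x) (s := N)
        calc (m x N).toReal ≤ (1:ℝ≥0∞).toReal := ENNReal.toReal_mono (by simp) this
          _ = 1 := by simp
      simpa using this
    · simp [Set.indicator_of_notMem h]
  have hae : ∀ᵐ x ∂ν, Ω.indicator (fun _ => (1:ℝ)) x * (m x N).toReal = 0 :=
    (integral_eq_zero_iff_of_nonneg (fun x => hnn x) hint).mp key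
  rw [ae_restrict_iff' hΩ]
  filter_upwards [hae] with x hx hxΩ
  rw [Set.indicator_of_mem hxΩ] at hx
  simp only [one_mul] at hx
  haveI := hprob x
  have hne : m x N ≠ ⊤ := measure_ne_top _ _
  exact ((ENNReal.toReal_eq_zero_iff _).mp hx).resolve_right hne

/-- Monotone iteration sequence. -/
private noncomputable def iterSeq (m : X → Measure X) (Ω : Set X) (lam' : ℝ) (g : ℝ → ℝ) :
    ℕ → X → ℝ
  | 0 => fun _ => 0
  | (k+1) => Ω.indicator fun x =>
      (∫ y, iterSeq m Ω lam' g k y ∂ m x) + lam' * g (iterSeq m Ω lam' g k x)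

private theorem exists_iter_limit
    (hprob : ∀ x, IsProbabilityMeasure (m x))
    (hmeas : ∀ A : Set X, MeasurableSet A → Measurable fun x => m x A)
    (hΩ : MeasurableSet Ω)
    (hnull : ∀ N : Set X, MeasurableSet N → ν N = 0 → ∀ᵐ x ∂ν.restrict Ω, m x N = 0)
    {lam' : ℝ} (hlam : 0 ≤ lam')
    {g : ℝ → ℝ} (hgc : Continuous g) (hgm : Monotone g) (hg0 : 0 ≤ g 0)
    {C : ℝ} (hC : 0 ≤ C)
    {w : X → ℝ} (hwmeas : Measurable w) (hw0 : ∀ x, 0 ≤ w x) (hwC : ∀ x, w x ≤ C)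
    (hwsuper : ∀ᵐ x ∂ν.restrict Ω, (∫ y, w y ∂ m x) + lam' * g (w x) ≤ w x) :
    ∃ U : X → ℝ, Measurable U ∧ (∀ x, 0 ≤ U x) ∧ (∀ x, U x ≤ C) ∧ (∀ x, x ∉ Ω → U x = 0) ∧
      (∀ᵐ x ∂ν.restrict Ω, U x = (∫ y, U y ∂ m x) + lam' * g (U x)) ∧
      (∀ z : X → ℝ, Measurable z → (∀ᵐ x ∂ν, 0 ≤ z x) →
        (∀ᵐ x ∂ν.restrict Ω, Integrable z (m x) ∧ (∫ y, z y ∂ m x) + lam' * g (z x) ≤ z x) →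
        ∀ᵐ x ∂ν, U x ≤ z x) := by
  set u : ℕ → X → ℝ := iterSeq m Ω lam' g with hu
  have hustep : ∀ k x, x ∈ Ω →
      u (k+1) x = (∫ y, u k y ∂ m x) + lam' * g (u k x) := by
    intro k x hx
    simp only [hu, iterSeq, Set.indicator_of_mem hx]
  have huoff : ∀ k x, x ∉ Ω → u k x = 0 := by
    intro k x hx
    cases k with
    | zero => rfl
    | succ k => simp only [hu, iterSeq, Set.indicator_of_notMem hx]
  have hmeasu : ∀ k, Measurable (u k) := by
    intro k
    induction k with
    | zero => exact measurable_const
    | succ k ih =>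
      exact (((measurable_kint' hprob hmeas ih).add
        (measurable_const.mul (hgc.measurable.comp ih))).indicator hΩ)
  have hbd : ∀ k, ∃ B : ℝ, 0 ≤ B ∧ ∀ x, 0 ≤ u k x ∧ u k x ≤ B := by
    intro k
    induction k with
    | zero => exact ⟨0, le_refl 0, fun x => ⟨le_refl 0, le_refl 0⟩⟩
    | succ k ih =>
      obtain ⟨B, hB0, hB⟩ := ih
      have hgB : 0 ≤ g B := le_trans hg0 (hgm hB0)
      refine ⟨B + lam' * g B, by positivity, fun x => ?_⟩
      by_cases hx : x ∈ Ω
      · rw [hustep k x hx]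
        haveI := hprob x
        have hint : Integrable (u k) (m x) :=
          bdd_integrable' hprob (hmeasu k) (fun y => (hB y).1) (fun y => (hB y).2) x
        constructor
        · have h1 : 0 ≤ ∫ y, u k y ∂ m x := integral_nonneg fun y => (hB y).1
          have h2 : 0 ≤ lam' * g (u k x) :=
            mul_nonneg hlam (le_trans hg0 (hgm (hB x).1))
          linarith
        · have h1 : (∫ y, u k y ∂ m x) ≤ B := by
            calc (∫ y, u k y ∂ m x) ≤ ∫ _, B ∂ m x :=
                  integral_mono hint (integrable_const B) fun y => (hB y).2
              _ = B := by simp [measure_univ]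
          have h2 : lam' * g (u k x) ≤ lam' * g B :=
            mul_le_mul_of_nonneg_left (hgm (hB x).2) hlam
          linarith
      · rw [huoff (k+1) x hx]
        constructor
        · exact le_refl 0
        · positivity
  have huint : ∀ k x, Integrable (u k) (m x) := by
    intro k x
    obtain ⟨B, _, hB⟩ := hbd k
    exact bdd_integrable' hprob (hmeasu k) (fun y => (hB y).1) (fun y => (hB y).2) x
  have hunn : ∀ k x, 0 ≤ u k x := fun k x => ((hbd k).choose_spec.2 x).1
  have hcomp : ∀ z : X → ℝ, Measurable z → (∀ᵐ x ∂ν, 0 ≤ z x) →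
      (∀ᵐ x ∂ν.restrict Ω, Integrable z (m x) ∧ (∫ y, z y ∂ m x) + lam' * g (z x) ≤ z x) →
      ∀ k, ∀ᵐ x ∂ν, u k x ≤ z x := by
    intro z hzmeas hz0 hzpack k
    induction k with
    | zero => exact hz0
    | succ k ih =>
      obtain ⟨N, hsub, hNmeas, hNnull⟩ := exists_measurable_superset_of_null (ae_iff.mp ih)
      have h1 := hnull N hNmeas hNnull
      have hrest : ∀ᵐ x ∂ν.restrict Ω, u (k+1) x ≤ z x := by
        filter_upwards [h1, hzpack, ae_restrict_of_ae ih, ae_restrict_mem hΩ]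
          with x hmN hzx hkx hxΩ
        obtain ⟨hIz, hsz⟩ := hzx
        rw [hustep k x hxΩ]
        have hae : ∀ᵐ y ∂ m x, u k y ≤ z y := by
          rw [ae_iff]
          exact measure_mono_null (fun y hy => hsub hy) hmN
        have h2 : (∫ y, u k y ∂ m x) ≤ ∫ y, z y ∂ m x :=
          integral_mono_ae (huint k x) hIz hae
        have h3 : lam' * g (u k x) ≤ lam' * g (z x) :=
          mul_le_mul_of_nonneg_left (hgm hkx) hlam
        linarith
      have := (ae_restrict_iff' hΩ).mp hrest
      filter_upwards [this, hz0] with x hx hzx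
      by_cases hxΩ : x ∈ Ω
      · exact hx hxΩ
      · rw [huoff (k+1) x hxΩ]; exact hzx
  have hwpack : ∀ᵐ x ∂ν.restrict Ω,
      Integrable w (m x) ∧ (∫ y, w y ∂ m x) + lam' * g (w x) ≤ w x := by
    filter_upwards [hwsuper] with x hx
    exact ⟨bdd_integrable' hprob hwmeas hw0 hwC x, hx⟩
  have hukw : ∀ k, ∀ᵐ x ∂ν, u k x ≤ w x :=
    hcomp w hwmeas (Filter.Eventually.of_forall hw0) hwpack
  have hmonok : ∀ k, ∀ᵐ x ∂ν, u k x ≤ u (k+1) x := by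
    intro k
    induction k with
    | zero =>
      refine Filter.Eventually.of_forall fun x => ?_
      exact hunn 1 x
    | succ k ih =>
      obtain ⟨N, hsub, hNmeas, hNnull⟩ := exists_measurable_superset_of_null (ae_iff.mp ih)
      have h1 := hnull N hNmeas hNnull
      have hrest : ∀ᵐ x ∂ν.restrict Ω, u (k+1) x ≤ u (k+2) x := by
        filter_upwards [h1, ae_restrict_of_ae ih, ae_restrict_mem hΩ] with x hmN hkx hxΩ
        rw [hustep k x hxΩ, hustep (k+1) x hxΩ]
        have hae : ∀ᵐ y ∂ m x, u k y ≤ u (k+1) y := by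
          rw [ae_iff]
          exact measure_mono_null (fun y hy => hsub hy) hmN
        have h2 : (∫ y, u k y ∂ m x) ≤ ∫ y, u (k+1) y ∂ m x :=
          integral_mono_ae (huint k x) (huint (k+1) x) hae
        have h3 : lam' * g (u k x) ≤ lam' * g (u (k+1) x) :=
          mul_le_mul_of_nonneg_left (hgm hkx) hlam
        linarith
      have := (ae_restrict_iff' hΩ).mp hrest
      filter_upwards [this] with x hx
      by_cases hxΩ : x ∈ Ω
      · exact hx hxΩ
      · rw [huoff (k+1) x hxΩ, huoff (k+2) x hxΩ]
  have hG : ∀ᵐ x ∂ν, ∀ k, u k x ≤ u (k+1) x ∧ u k x ≤ C := by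
    rw [ae_all_iff]
    intro k
    filter_upwards [hmonok k, hukw k] with x h1 h2
    exact ⟨h1, le_trans h2 (hwC x)⟩
  obtain ⟨N, hsub, hNmeas, hNnull⟩ := exists_measurable_superset_of_null (ae_iff.mp hG)
  have hNgood : ∀ x, x ∉ N → ∀ k, u k x ≤ u (k+1) x ∧ u k x ≤ C := by
    intro x hx
    by_contra hcon
    exact hx (hsub hcon)
  set U : X → ℝ := fun x => (⨆ k, ENNReal.ofReal (min C (u k x))).toReal with hU
  have hUmeas : Measurable U := by
    apply Measurable.ennreal_toReal
    exact Measurable.iSup fun k => (measurable_const.min (hmeasu k)).ennreal_ofReal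
  have hU0 : ∀ x, 0 ≤ U x := fun x => ENNReal.toReal_nonneg
  have hUC : ∀ x, U x ≤ C := by
    intro x
    apply ENNReal.toReal_le_of_le_ofReal hC
    exact iSup_le fun k => ENNReal.ofReal_le_ofReal (min_le_left _ _)
  have hUoff : ∀ x, x ∉ Ω → U x = 0 := by
    intro x hx
    have : ∀ k, u k x = 0 := fun k => huoff k x hx
    simp [hU, this, min_eq_right hC]
  have htend : ∀ x, x ∉ N → Tendsto (fun k => u k x) atTop (𝓝 (U x)) := by
    intro x hx
    have hmx : Monotone fun k => u k x :=
      monotone_nat_of_le_succ fun k => (hNgood x hx k).1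
    have hbdd : BddAbove (Set.range fun k => u k x) := by
      refine ⟨C, ?_⟩
      rintro r ⟨k, rfl⟩
      exact (hNgood x hx k).2
    have hT := tendsto_atTop_ciSup hmx hbdd
    have hL0 : 0 ≤ ⨆ k, u k x := by
      have := le_ciSup hbdd 0
      calc (0:ℝ) = u 0 x := rfl
        _ ≤ _ := this
    have hmin : ∀ k, min C (u k x) = u k x := fun k => min_eq_right (hNgood x hx k).2
    have hkey : (⨆ k, ENNReal.ofReal (min C (u k x))) = ENNReal.ofReal (⨆ k, u k x) := by
      simp only [hmin]
      symm
      exact Monotone.map_ciSup_of_continuousAt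
        (ENNReal.continuous_ofReal.continuousAt) (fun a b hab => ENNReal.ofReal_le_ofReal hab)
        hbdd
    have hUx : U x = ⨆ k, u k x := by
      rw [hU]
      simp only [hkey]
      exact ENNReal.toReal_ofReal hL0
    rw [hUx]
    exact hT
  have hNae : ∀ᵐ x ∂ν, x ∉ N := by
    rw [ae_iff]
    simpa using hNnull
  have heq : ∀ᵐ x ∂ν.restrict Ω, U x = (∫ y, U y ∂ m x) + lam' * g (U x) := by
    filter_upwards [hnull N hNmeas hNnull, ae_restrict_of_ae hNae, ae_restrict_mem hΩ]
      with x hmN hxN hxΩ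
    haveI := hprob x
    have hT1 : Tendsto (fun k => u (k+1) x) atTop (𝓝 (U x)) :=
      (htend x hxN).comp (tendsto_add_atTop_nat 1)
    have hTi : Tendsto (fun k => ∫ y, u k y ∂ m x) atTop (𝓝 (∫ y, U y ∂ m x)) := by
      apply tendsto_integral_of_dominated_convergence (bound := fun _ => C)
      · exact fun k => (hmeasu k).aestronglyMeasurable
      · exact integrable_const C
      · intro k
        have : ∀ᵐ y ∂ m x, y ∉ N := by
          rw [ae_iff]; simpa using hmN
        filter_upwards [this] with y hy
        rw [Real.norm_eq_abs, abs_of_nonneg (hunn k y)]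
        exact (hNgood y hy k).2
      · have : ∀ᵐ y ∂ m x, y ∉ N := by
          rw [ae_iff]; simpa using hmN
        filter_upwards [this] with y hy
        exact htend y hy
    have hT2 : Tendsto (fun k => (∫ y, u k y ∂ m x) + lam' * g (u k x)) atTop
        (𝓝 ((∫ y, U y ∂ m x) + lam' * g (U x))) := by
      apply Tendsto.add hTi
      apply Tendsto.const_mul
      exact (hgc.tendsto (U x)).comp (htend x hxN)
    have hT1' : Tendsto (fun k => (∫ y, u k y ∂ m x) + lam' * g (u k x)) atTop (𝓝 (U x)) := by
      apply hT1.congr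
      intro k
      exact hustep k x hxΩ
    exact tendsto_nhds_unique hT1' hT2
  refine ⟨U, hUmeas, hU0, hUC, hUoff, heq, ?_⟩
  intro z hzmeas hz0 hzpack
  have hk : ∀ᵐ x ∂ν, ∀ k, u k x ≤ z x :=
    ae_all_iff.mpr (hcomp z hzmeas hz0 hzpack)
  filter_upwards [hk, hNae] with x hxk hxN
  exact le_of_tendsto (htend x hxN) (Filter.Eventually.of_forall fun k => hxk k)

private lemma measurable_mBoundary (hrw : IsRandomWalk m) (hΩ : MeasurableSet Ω) :
    MeasurableSet (mBoundary m Ω) := by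
  have h1 : MeasurableSet {x | 0 < m x Ω} :=
    measurableSet_lt measurable_const (hrw.2 Ω hΩ)
  have : mBoundary m Ω = Ωᶜ ∩ {x | 0 < m x Ω} := by
    ext x; simp [mBoundary, Set.mem_setOf_eq, Set.mem_inter_iff, Set.mem_compl_iff]
  rw [this]
  exact hΩ.compl.inter h1

private lemma measurable_mClosure (hrw : IsRandomWalk m) (hΩ : MeasurableSet Ω) :
    MeasurableSet (mClosure m Ω) :=
  hΩ.union (measurable_mBoundary hrw hΩ)

private lemma sol_nonneg_ae (hrw : IsRandomWalk m) (hΩ : MeasurableSet Ω)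
    {lam : ℝ} {f : ℝ → ℝ} {z : X → ℝ} (hz : IsSol m ν Ω lam f z) :
    ∀ᵐ x ∂ν, 0 ≤ z x := by
  have hcl : MeasurableSet (mClosure m Ω) := measurable_mClosure hrw hΩ
  have h1 := (ae_restrict_iff' hcl).mp hz.2.1
  filter_upwards [h1] with x hx
  by_cases hmem : x ∈ mClosure m Ω
  · exact hx hmem
  · rw [hz.1.2.2.2 x hmem]

private lemma sol_equation (hrw : IsRandomWalk m) (hΩ : MeasurableSet Ω)
    {lam : ℝ} (hlam : 0 < lam) {f : ℝ → ℝ} (hmono : MonotoneOn f (Set.Ici 0))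
    (hf0 : 0 < f 0) {z : X → ℝ} (hz : IsSol m ν Ω lam f z) :
    ∀ᵐ x ∂ν.restrict Ω, 0 ≤ z x ∧ Integrable z (m x) ∧
      z x = (∫ y, z y ∂ m x) + lam * f (z x) := by
  have hnn : ∀ᵐ x ∂ν.restrict Ω, 0 ≤ z x :=
    ae_restrict_of_ae (sol_nonneg_ae hrw hΩ hz)
  filter_upwards [hnn, hz.2.2] with x hx0 heq
  haveI := hrw.1 x
  have hfpos : 0 < f (z x) :=
    lt_of_lt_of_le hf0 (hmono (Set.self_mem_Ici) hx0 hx0)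
  have hint : Integrable z (m x) := by
    by_contra hni
    have : ¬ Integrable (fun y => z y - z x) (m x) := by
      intro h
      have h2 := h.add (integrable_const (z x))
      have h3 : ((fun y => z y - z x) + fun _ => z x) = z := by
        funext y; simp
      rw [h3] at h2
      exact hni h2
    have hzero : deltaM m z x = 0 := integral_undef this
    rw [hzero] at heq
    have : 0 < lam * f (z x) := mul_pos hlam hfpos
    simp only [neg_zero] at heq
    linarith
  refine ⟨hx0, hint, ?_⟩
  have hdel : deltaM m z x = (∫ y, z y ∂ m x) - z x := by
    unfold deltaM
    rw [integral_sub hint (integrable_const (z x))]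
    simp [measure_univ]
  rw [hdel] at heq
  linarith

private lemma sol_bound (hrw : IsRandomWalk m) (hΩ : MeasurableSet Ω)
    (hnull : ∀ N : Set X, MeasurableSet N → ν N = 0 → ∀ᵐ x ∂ν.restrict Ω, m x N = 0)
    {lam : ℝ} (hlam : 0 < lam) {f : ℝ → ℝ} (hmono : MonotoneOn f (Set.Ici 0))
    (hf0 : 0 < f 0) {z : X → ℝ} (hz : IsSol m ν Ω lam f z)
    {s₀ : ℝ} (hs₀ : 0 < s₀) (h2s : ∀ s, s₀ ≤ s → 2 * s ≤ lam * f s) :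
    ∀ᵐ x ∂ν.restrict Ω, z x ≤ s₀ := by
  obtain ⟨N, hsub, hNmeas, hNnull⟩ :=
    exists_measurable_superset_of_null (ae_iff.mp (sol_nonneg_ae hrw hΩ hz))
  filter_upwards [sol_equation hrw hΩ hlam hmono hf0 hz, hnull N hNmeas hNnull]
    with x hx hmN
  obtain ⟨hx0, hint, heq⟩ := hx
  by_contra hgt
  push_neg at hgt
  have hge : s₀ ≤ z x := hgt.le
  have hintnn : 0 ≤ ∫ y, z y ∂ m x := by
    apply integral_nonneg_of_ae
    rw [Filter.EventuallyLE]
    rw [ae_iff]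
    apply measure_mono_null _ hmN
    intro y hy
    apply hsub
    simp only [Set.mem_setOf_eq, Pi.zero_apply] at hy ⊢
    exact hy
  have h1 : lam * f (z x) ≤ z x := by linarith
  have h2 : 2 * z x ≤ lam * f (z x) := h2s (z x) hge
  linarith

private lemma sol_package (hrw : IsRandomWalk m) (hΩ : MeasurableSet Ω)
    {lam lambar : ℝ} (hlam : 0 ≤ lam) (hbar : 0 < lambar) (hle : lam ≤ lambar)
    {f : ℝ → ℝ} (hmono : MonotoneOn f (Set.Ici 0)) (hf0 : 0 < f 0)
    {z : X → ℝ} (hz : IsSol m ν Ω lambar f z) :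
    ∀ᵐ x ∂ν.restrict Ω, Integrable z (m x) ∧
      (∫ y, z y ∂ m x) + lam * f (max (z x) 0) ≤ z x := by
  filter_upwards [sol_equation hrw hΩ hbar hmono hf0 hz] with x hx
  obtain ⟨hx0, hint, heq⟩ := hx
  refine ⟨hint, ?_⟩
  rw [max_eq_left hx0]
  have hfpos : 0 < f (z x) := lt_of_lt_of_le hf0 (hmono Set.self_mem_Ici hx0 hx0)
  nlinarith

private lemma sol_trunc (hrw : IsRandomWalk m) (hΩ : MeasurableSet Ω)
    (hnull : ∀ N : Set X, MeasurableSet N → ν N = 0 → ∀ᵐ x ∂ν.restrict Ω, m x N = 0)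
    {lam lambar C : ℝ} (hlam : 0 ≤ lam) (hbar : 0 < lambar) (hle : lam ≤ lambar) (hC : 0 ≤ C)
    {f : ℝ → ℝ} (hmono : MonotoneOn f (Set.Ici 0)) (hf0 : 0 < f 0)
    {z : X → ℝ} (hz : IsSol m ν Ω lambar f z)
    (hzC : ∀ᵐ x ∂ν.restrict Ω, z x ≤ C) :
    ∃ w : X → ℝ, Measurable w ∧ (∀ x, 0 ≤ w x) ∧ (∀ x, w x ≤ C) ∧
      (∀ᵐ x ∂ν.restrict Ω, (∫ y, w y ∂ m x) + lam * f (max (w x) 0) ≤ w x) := by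
  set w : X → ℝ := Ω.indicator (fun x => min C (max (z x) 0)) with hw
  have hwmeas : Measurable w :=
    (measurable_const.min ((hz.1.1).max measurable_const)).indicator hΩ
  have hw0 : ∀ x, 0 ≤ w x := by
    intro x
    by_cases hx : x ∈ Ω
    · rw [hw]; rw [Set.indicator_of_mem hx]
      exact le_min hC (le_max_right _ _)
    · rw [hw]; rw [Set.indicator_of_notMem hx]
  have hwC : ∀ x, w x ≤ C := by
    intro x
    by_cases hx : x ∈ Ω
    · rw [hw]; rw [Set.indicator_of_mem hx]; exact min_le_left _ _
    · rw [hw]; rw [Set.indicator_of_notMem hx]; exact hC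
  have hbdry : MeasurableSet (mBoundary m Ω) := measurable_mBoundary hrw hΩ
  have hzΩ : ∀ᵐ x ∂ν, x ∈ Ω → (0 ≤ z x ∧ z x ≤ C) := by
    rw [← ae_restrict_iff' hΩ]
    filter_upwards [ae_restrict_of_ae (sol_nonneg_ae hrw hΩ hz), hzC] with x h1 h2
    exact ⟨h1, h2⟩
  have hzB : ∀ᵐ x ∂ν, x ∈ mBoundary m Ω → z x = 0 :=
    (ae_restrict_iff' hbdry).mp hz.1.2.2.1
  have hwz : ∀ᵐ x ∂ν, w x = z x := by
    filter_upwards [hzΩ, hzB] with x h1 h2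
    by_cases hx : x ∈ Ω
    · rw [hw]; rw [Set.indicator_of_mem hx, max_eq_left (h1 hx).1, min_eq_right (h1 hx).2]
    · rw [hw]; rw [Set.indicator_of_notMem hx]
      by_cases hb : x ∈ mBoundary m Ω
      · exact (h2 hb).symm
      · have : x ∉ mClosure m Ω := by
          intro hmem
          rcases hmem with h | h
          · exact hx h
          · exact hb h
        exact (hz.1.2.2.2 x this).symm
  obtain ⟨N, hsub, hNmeas, hNnull⟩ := exists_measurable_superset_of_null (ae_iff.mp hwz)
  have hxN : ∀ᵐ x ∂ν, x ∉ N := by rw [ae_iff]; simpa using hNnull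
  refine ⟨w, hwmeas, hw0, hwC, ?_⟩
  filter_upwards [sol_equation hrw hΩ hbar hmono hf0 hz, hnull N hNmeas hNnull,
    ae_restrict_of_ae hxN] with x hx hmN hxnN
  obtain ⟨hx0, hint, heq⟩ := hx
  have hwzx : w x = z x := by
    by_contra hcon
    exact hxnN (hsub hcon)
  have hiw : (∫ y, w y ∂ m x) = ∫ y, z y ∂ m x := by
    apply integral_congr_ae
    rw [Filter.EventuallyEq, ae_iff]
    apply measure_mono_null _ hmN
    intro y hy
    apply hsub
    simpa using hy
  rw [hiw, hwzx, max_eq_left (hwzx ▸ hw0 x)]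
  have hfpos : 0 < f (z x) := lt_of_lt_of_le hf0 (hmono Set.self_mem_Ici hx0 hx0)
  nlinarith

private lemma build_isSol (hrw : IsRandomWalk m) (hΩ : MeasurableSet Ω)
    (hfin : ν (mClosure m Ω) ≠ ⊤) {lam : ℝ} {f : ℝ → ℝ} {U : X → ℝ} {C : ℝ}
    (hUmeas : Measurable U) (hU0 : ∀ x, 0 ≤ U x) (hUC : ∀ x, U x ≤ C)
    (hUoff : ∀ x, x ∉ Ω → U x = 0)
    (heq : ∀ᵐ x ∂ν.restrict Ω, U x = (∫ y, U y ∂ m x) + lam * f (max (U x) 0)) :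
    IsSol m ν Ω lam f U := by
  have hbdry : MeasurableSet (mBoundary m Ω) := measurable_mBoundary hrw hΩ
  refine ⟨⟨hUmeas, ?_, ?_, ?_⟩, ?_, ?_⟩
  · haveI : IsFiniteMeasure (ν.restrict (mClosure m Ω)) := by
      constructor
      rw [Measure.restrict_apply_univ]
      exact lt_of_le_of_ne le_top hfin
    apply MemLp.of_bound hUmeas.aestronglyMeasurable C
    apply Filter.Eventually.of_forall
    intro x
    rw [Real.norm_eq_abs, abs_of_nonneg (hU0 x)]
    exact hUC x
  · rw [ae_restrict_iff' hbdry]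
    apply Filter.Eventually.of_forall
    intro x hx
    exact hUoff x hx.1
  · intro x hx
    apply hUoff
    intro hxΩ
    exact hx (Or.inl hxΩ)
  · exact Filter.Eventually.of_forall fun x => hU0 x
  · filter_upwards [heq] with x hx
    haveI := hrw.1 x
    have hint : Integrable U (m x) := bdd_integrable' hrw.1 hUmeas hU0 hUC x
    have hdel : deltaM m U x = (∫ y, U y ∂ m x) - U x := by
      unfold deltaM
      rw [integral_sub hint (integrable_const (U x))]
      simp [measure_univ]
    rw [max_eq_left (hU0 x)] at hx
    rw [hdel]
    linarith

private lemma zero_isSol (hrw : IsRandomWalk m) {f : ℝ → ℝ} :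
    IsSol m ν Ω 0 f (fun _ => 0) := by
  refine ⟨⟨measurable_const, ?_, ?_, ?_⟩, ?_, ?_⟩
  · exact MemLp.zero'
  · exact Filter.Eventually.of_forall fun x => rfl
  · intro x _; rfl
  · exact Filter.Eventually.of_forall fun x => le_refl 0
  · apply Filter.Eventually.of_forall
    intro x
    simp [deltaM]

private lemma mono_limit
    (hprob : ∀ x, IsProbabilityMeasure (m x))
    (hnull : ∀ N : Set X, MeasurableSet N → ν N = 0 → ∀ᵐ x ∂ν.restrict Ω, m x N = 0)
    {g : ℝ → ℝ} (hgc : Continuous g)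
    {C : ℝ} (hC : 0 ≤ C)
    {lams : ℕ → ℝ} {lamS : ℝ} (hlamtend : Filter.Tendsto lams Filter.atTop (nhds lamS))
    {V : ℕ → X → ℝ} (hVmeas : ∀ n, Measurable (V n)) (hV0 : ∀ n x, 0 ≤ V n x)
    (hVC : ∀ n x, V n x ≤ C) (hVoff : ∀ n x, x ∉ Ω → V n x = 0)
    (hVeq : ∀ n, ∀ᵐ x ∂ν.restrict Ω, V n x = (∫ y, V n y ∂ m x) + lams n * g (V n x))
    (hVmono : ∀ n, ∀ᵐ x ∂ν, V n x ≤ V (n+1) x) :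
    ∃ W : X → ℝ, Measurable W ∧ (∀ x, 0 ≤ W x) ∧ (∀ x, W x ≤ C) ∧
      (∀ x, x ∉ Ω → W x = 0) ∧
      (∀ᵐ x ∂ν.restrict Ω, W x = (∫ y, W y ∂ m x) + lamS * g (W x)) := by
  have hG : ∀ᵐ x ∂ν, ∀ n, V n x ≤ V (n+1) x := ae_all_iff.mpr hVmono
  obtain ⟨N, hsub, hNmeas, hNnull⟩ := exists_measurable_superset_of_null (ae_iff.mp hG)
  have hNgood : ∀ x, x ∉ N → ∀ n, V n x ≤ V (n+1) x := by
    intro x hx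
    by_contra hcon
    exact hx (hsub hcon)
  set W : X → ℝ := fun x => (⨆ n, ENNReal.ofReal (V n x)).toReal with hW
  have hWmeas : Measurable W := by
    apply Measurable.ennreal_toReal
    exact Measurable.iSup fun n => (hVmeas n).ennreal_ofReal
  have hW0 : ∀ x, 0 ≤ W x := fun x => ENNReal.toReal_nonneg
  have hWC : ∀ x, W x ≤ C := by
    intro x
    apply ENNReal.toReal_le_of_le_ofReal hC
    exact iSup_le fun n => ENNReal.ofReal_le_ofReal (hVC n x)
  have hWoff : ∀ x, x ∉ Ω → W x = 0 := by
    intro x hx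
    have : ∀ n, V n x = 0 := fun n => hVoff n x hx
    simp [hW, this]
  have htend : ∀ x, x ∉ N → Filter.Tendsto (fun n => V n x) Filter.atTop (nhds (W x)) := by
    intro x hx
    have hmx : Monotone fun n => V n x := monotone_nat_of_le_succ fun n => hNgood x hx n
    have hbdd : BddAbove (Set.range fun n => V n x) := by
      refine ⟨C, ?_⟩
      rintro r ⟨n, rfl⟩
      exact hVC n x
    have hT := tendsto_atTop_ciSup hmx hbdd
    have hL0 : 0 ≤ ⨆ n, V n x := le_trans (hV0 0 x) (le_ciSup hbdd 0)
    have hkey : (⨆ n, ENNReal.ofReal (V n x)) = ENNReal.ofReal (⨆ n, V n x) := by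
      symm
      exact Monotone.map_ciSup_of_continuousAt
        (ENNReal.continuous_ofReal.continuousAt) (fun a b hab => ENNReal.ofReal_le_ofReal hab)
        hbdd
    have hWx : W x = ⨆ n, V n x := by
      rw [hW]
      simp only [hkey]
      exact ENNReal.toReal_ofReal hL0
    rw [hWx]
    exact hT
  have hNae : ∀ᵐ x ∂ν, x ∉ N := by rw [ae_iff]; simpa using hNnull
  refine ⟨W, hWmeas, hW0, hWC, hWoff, ?_⟩
  have hVeq' : ∀ᵐ x ∂ν.restrict Ω, ∀ n,
      V n x = (∫ y, V n y ∂ m x) + lams n * g (V n x) := ae_all_iff.mpr hVeq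
  filter_upwards [hnull N hNmeas hNnull, ae_restrict_of_ae hNae, hVeq'] with x hmN hxN hxeq
  haveI := hprob x
  have hTx : Filter.Tendsto (fun n => V n x) Filter.atTop (nhds (W x)) := htend x hxN
  have hTi : Filter.Tendsto (fun n => ∫ y, V n y ∂ m x) Filter.atTop
      (nhds (∫ y, W y ∂ m x)) := by
    apply tendsto_integral_of_dominated_convergence (bound := fun _ => C)
    · exact fun n => (hVmeas n).aestronglyMeasurable
    · exact integrable_const C
    · intro n
      apply Filter.Eventually.of_forall
      intro y
      rw [Real.norm_eq_abs, abs_of_nonneg (hV0 n y)]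
      exact hVC n y
    · have : ∀ᵐ y ∂ m x, y ∉ N := by rw [ae_iff]; simpa using hmN
      filter_upwards [this] with y hy
      exact htend y hy
  have hT2 : Filter.Tendsto (fun n => (∫ y, V n y ∂ m x) + lams n * g (V n x)) Filter.atTop
      (nhds ((∫ y, W y ∂ m x) + lamS * g (W x))) := by
    apply Filter.Tendsto.add hTi
    exact Filter.Tendsto.mul hlamtend ((hgc.tendsto (W x)).comp hTx)
  have hT1 : Filter.Tendsto (fun n => (∫ y, V n y ∂ m x) + lams n * g (V n x)) Filter.atTop
      (nhds (W x)) := by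
    apply hTx.congr
    intro n
    exact hxeq n
  exact tendsto_nhds_unique hT1 hT2

end ExtremalAux

/-- **Existence of the extremal solution**: if `f ∈ C¹([0,∞))` is strictly convex, increasing,
with `f(0) > 0` and superlinear at infinity, then `(P(λ* f))` admits a bounded minimal solution
`u*` (the extremal solution), where `λ*` is the extremal parameter. -/
theorem extremal_solution_existence
    {X : Type*} [MeasurableSpace X] [MeasurableSpace.CountablyGenerated X]
    (m : X → MeasureTheory.Measure X) (ν : MeasureTheory.Measure X)
    (Ω : Set X) (lam : ℝ) (φ : X → ℝ) (α M : ℝ)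
    (hst : Standing m ν Ω lam φ α M)
    (f : ℝ → ℝ) (hC1 : ContDiffOn ℝ 1 f (Set.Ici 0))
    (hconv : StrictConvexOn ℝ (Set.Ici 0) f)
    (hmono : MonotoneOn f (Set.Ici 0)) (hf0 : 0 < f 0)
    (hsup : Filter.Tendsto (fun s => f s / s) Filter.atTop Filter.atTop) :
    ∃ u : X → ℝ, IsMinimalSol m ν Ω (lamStar m ν Ω f) f u ∧ IsBdd ν (mClosure m Ω) u := by
  classical
  obtain ⟨hrw, hrev, hsigma, hmeasΩ, hconn, hposΩ, hltΩ, hfin, hlamPos, hpoincare,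
    hphiMem, heig, halphaPos, halphaM, hphiLB, hphiUB⟩ := hst
  have hprob := hrw.1
  have hmeasA := hrw.2
  have hfinΩ : ν Ω ≠ ⊤ :=
    (lt_of_le_of_lt (measure_mono (Set.subset_union_left)) hfin).ne
  have hfincl : ν (mClosure m Ω) ≠ ⊤ := hfin.ne
  have hnull : ∀ N : Set X, MeasurableSet N → ν N = 0 → ∀ᵐ x ∂ν.restrict Ω, m x N = 0 :=
    fun N hN h0 => null_transfer hrev hprob hmeasA hmeasΩ hfinΩ hN h0
  set g : ℝ → ℝ := fun s => f (max s 0) with hg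
  have hgc : Continuous g := by
    have hmc : Continuous fun s : ℝ => max s 0 := continuous_id.max continuous_const
    exact (hC1.continuousOn).comp_continuous hmc fun x => le_max_right x 0
  have hgm : Monotone g := fun a b hab =>
    hmono (le_max_right a 0) (le_max_right b 0) (max_le_max hab le_rfl)
  have hg00 : g 0 = f 0 := by simp [hg]
  have hg0 : 0 ≤ g 0 := by rw [hg00]; exact hf0.le
  set S : Set ℝ :=
    {lam : ℝ | 0 ≤ lam ∧ ∃ u : X → ℝ, IsSol m ν Ω lam f u ∧ IsBdd ν (mClosure m Ω) u}
    with hSdef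
  have hlamdef : lamStar m ν Ω f = sSup S := rfl
  have h0S : (0:ℝ) ∈ S := by
    refine ⟨le_rfl, fun _ => 0, zero_isSol hrw, 0, ?_⟩
    exact Filter.Eventually.of_forall fun x => by simp
  have hzero : IsMinimalSol m ν Ω 0 f (fun _ => 0) ∧ IsBdd ν (mClosure m Ω) (fun _ => 0) := by
    refine ⟨⟨zero_isSol hrw, ?_⟩, 0, Filter.Eventually.of_forall fun x => by simp⟩
    intro v hv
    exact hv.2.1
  by_cases hbdd : BddAbove S
  swap
  · have hz : lamStar m ν Ω f = 0 := by
      rw [hlamdef, csSup_of_not_bddAbove hbdd, Real.sSup_empty]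
    rw [hz]
    exact ⟨fun _ => 0, hzero.1, hzero.2⟩
  set lamS := sSup S with hlamSdef
  have hstar : lamStar m ν Ω f = lamS := hlamdef
  have hlamS0 : 0 ≤ lamS := le_csSup hbdd h0S
  rcases eq_or_lt_of_le hlamS0 with heq0 | hposS
  · rw [hstar, ← heq0]
    exact ⟨fun _ => 0, hzero.1, hzero.2⟩
  -- Main case: `lamS > 0`.
  -- A uniform a priori bound from superlinearity.
  obtain ⟨s₁, hs₁⟩ := Filter.eventually_atTop.mp (hsup.eventually_ge_atTop (4 / lamS))
  set s₀ : ℝ := max s₁ 1 with hs0def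
  have hs₀pos : (0:ℝ) < s₀ := lt_of_lt_of_le one_pos (le_max_right _ _)
  have hkey : ∀ lambar : ℝ, lamS / 2 ≤ lambar → ∀ s, s₀ ≤ s → 2 * s ≤ lambar * f s := by
    intro lb hlb s hs
    have hss₁ : s₁ ≤ s := le_trans (le_max_left _ _) hs
    have hspos : 0 < s := lt_of_lt_of_le hs₀pos hs
    have h1 : 4 / lamS ≤ f s / s := hs₁ s hss₁
    have h2 : (4 / lamS) * s ≤ f s := by
      have := (le_div_iff₀ hspos).mp h1
      linarith
    have h4pos : 0 < (4 / lamS) * s := by positivity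
    have hfs0 : 0 ≤ f s := le_trans h4pos.le h2
    have hcalc : (lamS / 2) * ((4 / lamS) * s) = 2 * s := by
      field_simp
      ring
    calc 2 * s = (lamS / 2) * ((4 / lamS) * s) := hcalc.symm
      _ ≤ (lamS / 2) * f s := by
          apply mul_le_mul_of_nonneg_left h2
          positivity
      _ ≤ lb * f s := mul_le_mul_of_nonneg_right hlb hfs0
  -- The increasing sequence of parameters.
  set lams : ℕ → ℝ := fun n => lamS - lamS / ((n : ℝ) + 2) with hlamsdef
  have hlams_lt : ∀ n, lams n < lamS := by
    intro n
    have h1 : 0 < lamS / ((n : ℝ) + 2) := by positivity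
    simp only [hlamsdef]
    linarith
  have hlams_half : ∀ n, lamS / 2 ≤ lams n := by
    intro n
    have h2n : (2:ℝ) ≤ (n:ℝ) + 2 := by
      have := Nat.cast_nonneg (α := ℝ) n
      linarith
    have h1 : lamS / ((n:ℝ) + 2) ≤ lamS / 2 := by
      apply div_le_div_of_nonneg_left hlamS0 two_pos h2n
    simp only [hlamsdef]
    linarith
  have hlams_pos : ∀ n, 0 < lams n :=
    fun n => lt_of_lt_of_le (by positivity) (hlams_half n)
  have hlams_mono : ∀ n, lams n ≤ lams (n+1) := by
    intro n
    have h1 : lamS / ((n:ℝ) + 1 + 2) ≤ lamS / ((n:ℝ) + 2) := by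
      apply div_le_div_of_nonneg_left hlamS0
      · have := Nat.cast_nonneg (α := ℝ) n
        linarith
      · linarith
    simp only [hlamsdef]
    push_cast
    linarith
  have hlams_tend : Filter.Tendsto lams Filter.atTop (nhds lamS) := by
    have h1 : Filter.Tendsto (fun n : ℕ => lamS / ((n:ℝ) + 2)) Filter.atTop (nhds 0) := by
      have h2 := (tendsto_const_div_atTop_nhds_zero_nat lamS).comp
        (Filter.tendsto_add_atTop_nat 2)
      have h3 : (fun n : ℕ => lamS / ((n:ℝ) + 2))
          = (fun n : ℕ => lamS / (n:ℝ)) ∘ (fun n => n + 2) := by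
        funext n
        have hc : ((n + 2 : ℕ) : ℝ) = (n : ℝ) + 2 := by push_cast; ring
        simp [Function.comp_def, hc]
      rw [h3]
      exact h2
    have h4 := Filter.Tendsto.sub (tendsto_const_nhds (x := lamS)) h1
    simpa [hlamsdef] using h4
  -- Minimal solutions at each level `lams n`.
  have hex : ∀ n : ℕ, ∃ U : X → ℝ, Measurable U ∧ (∀ x, 0 ≤ U x) ∧ (∀ x, U x ≤ s₀) ∧
      (∀ x, x ∉ Ω → U x = 0) ∧
      (∀ᵐ x ∂ν.restrict Ω, U x = (∫ y, U y ∂ m x) + lams n * g (U x)) ∧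
      (∀ z : X → ℝ, Measurable z → (∀ᵐ x ∂ν, 0 ≤ z x) →
        (∀ᵐ x ∂ν.restrict Ω, Integrable z (m x) ∧ (∫ y, z y ∂ m x) + lams n * g (z x) ≤ z x) →
        ∀ᵐ x ∂ν, U x ≤ z x) := by
    intro n
    obtain ⟨lam', hlam'S, hlt'⟩ := exists_lt_of_lt_csSup ⟨0, h0S⟩ (hlams_lt n)
    obtain ⟨hlam'0, z, hzsol, hzbdd⟩ := hlam'S
    have hlam'pos : 0 < lam' := lt_trans (hlams_pos n) hlt'
    have hlam'half : lamS / 2 ≤ lam' := le_trans (hlams_half n) hlt'.le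
    have hzC : ∀ᵐ x ∂ν.restrict Ω, z x ≤ s₀ :=
      sol_bound hrw hmeasΩ hnull hlam'pos hmono hf0 hzsol hs₀pos (hkey lam' hlam'half)
    obtain ⟨w, hwmeas, hw0, hwC, hwsuper⟩ :=
      sol_trunc hrw hmeasΩ hnull (hlams_pos n).le hlam'pos hlt'.le hs₀pos.le hmono hf0
        hzsol hzC
    exact exists_iter_limit hprob hmeasA hmeasΩ hnull (hlams_pos n).le hgc hgm hg0 hs₀pos.le
      hwmeas hw0 hwC (by simpa [hg] using hwsuper)
  choose Useq hUmeas hU0 hUC hUoff hUeq hUcompare using hex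
  -- The sequence of minimal solutions is monotone in `n`.
  have hUmono : ∀ n, ∀ᵐ x ∂ν, Useq n x ≤ Useq (n+1) x := by
    intro n
    apply hUcompare n (Useq (n+1)) (hUmeas (n+1))
      (Filter.Eventually.of_forall (hU0 (n+1)))
    filter_upwards [hUeq (n+1)] with x hx
    refine ⟨bdd_integrable' hprob (hUmeas (n+1)) (hU0 (n+1)) (hUC (n+1)) x, ?_⟩
    have hgpos : 0 < g (Useq (n+1) x) := by
      have h1 : g 0 ≤ g (Useq (n+1) x) := hgm (hU0 (n+1) x)
      have h2 : 0 < g 0 := by rw [hg00]; exact hf0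
      linarith
    have h5 : lams n * g (Useq (n+1) x) ≤ lams (n+1) * g (Useq (n+1) x) :=
      mul_le_mul_of_nonneg_right (hlams_mono n) hgpos.le
    linarith
  -- Pass to the limit to obtain a solution at `lamS`.
  obtain ⟨W, hWmeas, hW0, hWC, hWoff, hWeq⟩ :=
    mono_limit hprob hnull hgc hs₀pos.le hlams_tend hUmeas hU0 hUC hUoff hUeq hUmono
  -- Run the iteration once more, at `lamS`, below the supersolution `W`.
  obtain ⟨U, hU1, hU2, hU3, hU4, hU5, hU6⟩ :=
    exists_iter_limit hprob hmeasA hmeasΩ hnull hposS.le hgc hgm hg0 hs₀pos.le hWmeas hW0 hWC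
      (by filter_upwards [hWeq] with x hx; exact le_of_eq hx.symm)
  refine ⟨U, ⟨?_, ?_⟩, s₀, Filter.Eventually.of_forall fun x => ?_⟩
  · rw [hstar]
    exact build_isSol hrw hmeasΩ hfincl hU1 hU2 hU3 hU4 (by simpa [hg] using hU5)
  · intro v hv
    rw [hstar] at hv
    have hpk := sol_package hrw hmeasΩ hposS.le hposS le_rfl hmono hf0 hv
    have hle := hU6 v hv.1.1 (sol_nonneg_ae hrw hmeasΩ hv) (by simpa [hg] using hpk)
    exact ae_restrict_of_ae hle
  · rw [abs_of_nonneg (hU2 x)]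
    exact hU3 x
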